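/- Let d ≥ 4 be even and 1 ≤ p, r ≤ ∞. Suppose that for a fixed constant C₀ > 0 the estimate ‖A_C f‖_{L^r(C,σ)} ≤ C₀ ‖f‖_{L^p(F_q^d, dx)} holds for all functions f : F_q^d → ℂ and all sufficiently large powers q of odd primes, and suppose that the cone C contains a (d/2)-dimensional F_q-linear subspace H of F_q^d. Then the point (1/p, 1/r) ∈ ℝ² must lie in the convex hull of the five points (0,0), (0,1), ((d−1)/d, 1), P₁ = ((d−1)/d, 1/(d−2)), and P₂ = ((d²−3d+2)/(d²−2d+2), (d−2)/(d²−2d+2)). -/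

import Mathlib

open Finset MeasureTheory
open scoped ENNReal

namespace ConeFF

variable (F : Type) [Field F] [Fintype F] [DecidableEq F]

/-- The cone `C = {x ∈ F^d : x₁² + ⋯ + x_{d-2}² = x_{d-1} x_d}` (0-indexed). -/
def cone (d : ℕ) (hd : 3 ≤ d) : Finset (Fin d → F) :=
  Finset.univ.filter fun x =>
    (∑ i ∈ Finset.univ.filter (fun i : Fin d => (i : ℕ) < d - 2), x i ^ 2) =
      x ⟨d - 2, by omega⟩ * x ⟨d - 1, by omega⟩

/-- The quadratic form `Γ(ξ) = ξ₁² + ⋯ + ξ_{d-2}² − 4 ξ_{d-1} ξ_d`. -/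
def gammaForm (d : ℕ) (hd : 3 ≤ d) (ξ : Fin d → F) : F :=
  (∑ i ∈ Finset.univ.filter (fun i : Fin d => (i : ℕ) < d - 2), ξ i ^ 2) -
    4 * ξ ⟨d - 2, by omega⟩ * ξ ⟨d - 1, by omega⟩

/-- Indicator function of a finite set, with values in `ℂ`. -/
def ind {V : Type} [DecidableEq V] (E : Finset V) : V → ℂ :=
  fun x => if x ∈ E then 1 else 0

/-- Convolution with respect to the normalized counting measure `dx`. -/
noncomputable def conv (d : ℕ) (f g : (Fin d → F) → ℂ) : (Fin d → F) → ℂ :=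
  fun y => ((Fintype.card F : ℂ) ^ d)⁻¹ * ∑ x, f (y - x) * g x

/-- The averaging operator `f ∗ σ` over the cone. -/
noncomputable def avg (d : ℕ) (hd : 3 ≤ d) (f : (Fin d → F) → ℂ) : (Fin d → F) → ℂ :=
  fun y => ((cone F d hd).card : ℂ)⁻¹ * ∑ x ∈ cone F d hd, f (y - x)

/-- Inverse Fourier transform `f^∨(m) = q^{-d} ∑_x χ(m·x) f(x)`. -/
noncomputable def invFT (d : ℕ) (χ : AddChar F ℂ) (f : (Fin d → F) → ℂ)
    (m : Fin d → F) : ℂ :=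
  ((Fintype.card F : ℂ) ^ d)⁻¹ * ∑ x, χ (dotProduct m x) * f x

/-- Fourier transform `ĝ(x) = ∑_m χ(−m·x) g(m)` on the dual space. -/
noncomputable def ft (d : ℕ) (χ : AddChar F ℂ) (g : (Fin d → F) → ℂ)
    (x : Fin d → F) : ℂ :=
  ∑ m, χ (-(dotProduct m x)) * g m

/-- `σ^∨(m) = |C|⁻¹ ∑_{x∈C} χ(m·x)`. -/
noncomputable def sigmaInv (d : ℕ) (hd : 3 ≤ d) (χ : AddChar F ℂ) (m : Fin d → F) : ℂ :=
  ((cone F d hd).card : ℂ)⁻¹ * ∑ x ∈ cone F d hd, χ (dotProduct m x)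

/-- `K(m) = σ^∨(m) − δ₀(m)`. -/
noncomputable def Kfun (d : ℕ) (hd : 3 ≤ d) (χ : AddChar F ℂ) (m : Fin d → F) : ℂ :=
  sigmaInv F d hd χ m - if m = 0 then 1 else 0

/-- `M(m) = C^∨(m) − (|C|/q^d) δ₀(m)`. -/
noncomputable def Mfun (d : ℕ) (hd : 3 ≤ d) (χ : AddChar F ℂ) (m : Fin d → F) : ℂ :=
  invFT F d χ (ind (cone F d hd)) m -
    if m = 0 then ((cone F d hd).card : ℂ) / (Fintype.card F : ℂ) ^ d else 0

/-- `L^p(C,σ)` norm (for finite `p`), with `σ` the normalized surface measure. -/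
noncomputable def coneLpNorm (d : ℕ) (hd : 3 ≤ d) (p : ℝ) (h : (Fin d → F) → ℂ) : ℝ :=
  (((cone F d hd).card : ℝ)⁻¹ * ∑ x ∈ cone F d hd, ‖h x‖ ^ p) ^ (1 / p)

/-- `L^p(F_q^d, dx)` norm (for finite `p`), with `dx` the normalized counting measure. -/
noncomputable def spaceLpNorm (d : ℕ) (p : ℝ) (f : (Fin d → F) → ℂ) : ℝ :=
  (((Fintype.card F : ℝ) ^ d)⁻¹ * ∑ x, ‖f x‖ ^ p) ^ (1 / p)

end ConeFF

instance (V : Type) (d : ℕ) : MeasurableSpace (Fin d → V) := ⊤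

namespace ConeFF

variable (F : Type) [Field F] [Fintype F] [DecidableEq F]

/-- The normalized counting measure `dx` on `F_q^d`. -/
noncomputable def dxMeasure (d : ℕ) : Measure (Fin d → F) :=
  ((Fintype.card F : ℝ≥0∞) ^ d)⁻¹ • Measure.count

/-- The normalized surface measure `σ` on the cone. -/
noncomputable def coneMeasure (d : ℕ) (hd : 3 ≤ d) : Measure (Fin d → F) :=
  ((cone F d hd).card : ℝ≥0∞)⁻¹ •
    Measure.count.restrict (↑(cone F d hd) : Set (Fin d → F))



variable {F}

lemma zero_mem_cone (d : ℕ) (hd : 3 ≤ d) : (0 : Fin d → F) ∈ cone F d hd := by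
  simp [cone]

lemma neg_mem_cone {d : ℕ} {hd : 3 ≤ d} {x : Fin d → F} (hx : x ∈ cone F d hd) :
    -x ∈ cone F d hd := by
  simp only [cone, mem_filter, mem_univ, true_and] at hx ⊢
  simpa [neg_mul_neg] using hx

lemma cone_card_le (d : ℕ) (hd : 3 ≤ d) :
    (cone F d hd).card ≤ 3 * Fintype.card F ^ (d - 1) := by
  classical
  set q := Fintype.card F
  set j0 : Fin d := ⟨0, by omega⟩
  set j1 : Fin d := ⟨d - 2, by omega⟩
  set j2 : Fin d := ⟨d - 1, by omega⟩
  have hj12 : j1 ≠ j2 := by simp [j1, j2, Fin.ext_iff]; omega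
  have hj01 : j0 ≠ j1 := by simp [j0, j1, Fin.ext_iff]; omega
  have hj02 : j0 ≠ j2 := by simp [j0, j2, Fin.ext_iff]; omega
  -- the sum range doesn't include j1, j2, but includes j0
  have hmem0 : j0 ∈ Finset.univ.filter (fun i : Fin d => (i : ℕ) < d - 2) := by
    simp [j0]; omega
  have hnm1 : j1 ∉ Finset.univ.filter (fun i : Fin d => (i : ℕ) < d - 2) := by
    simp [j1]
  have hnm2 : j2 ∉ Finset.univ.filter (fun i : Fin d => (i : ℕ) < d - 2) := by
    simp [j2]; omega
  have hcard1 : Fintype.card {i : Fin d // i ≠ j1} = d - 1 := by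
    simp [Fintype.card_subtype_compl, Fintype.card_fin]
  have hcard0 : Fintype.card {i : Fin d // i ≠ j0} = d - 1 := by
    simp [Fintype.card_subtype_compl, Fintype.card_fin]
  set A1 := (cone F d hd).filter (fun x => x j2 ≠ 0) with hA1
  set A2 := (cone F d hd).filter (fun x => x j2 = 0) with hA2
  have hsplit : (cone F d hd).card = A2.card + A1.card := by
    rw [hA1, hA2]
    exact (Finset.card_filter_add_card_filter_not _).symm
  -- A1 : x j1 is determined by the others
  have h1 : A1.card ≤ q ^ (d - 1) := by
    have : A1.card = (A1.image (fun (x : Fin d → F) (i : {i : Fin d // i ≠ j1}) => x i)).card := by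
      rw [Finset.card_image_of_injOn]
      intro a ha b hb hab
      simp only [hA1, mem_coe, mem_filter] at ha hb
      obtain ⟨ha, ha2⟩ := ha
      obtain ⟨hb, hb2⟩ := hb
      simp only [cone, mem_filter, mem_univ, true_and] at ha hb
      have heq : ∀ i : Fin d, i ≠ j1 → a i = b i := fun i hi =>
        congrFun hab ⟨i, hi⟩
      have hsum : ∀ i ∈ Finset.univ.filter (fun i : Fin d => (i : ℕ) < d - 2),
          a i ^ 2 = b i ^ 2 := by
        intro i hi
        rw [heq i (by rintro rfl; exact hnm1 hi)]
      have hs : (∑ i ∈ Finset.univ.filter (fun i : Fin d => (i : ℕ) < d - 2), a i ^ 2)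
          = ∑ i ∈ Finset.univ.filter (fun i : Fin d => (i : ℕ) < d - 2), b i ^ 2 :=
        Finset.sum_congr rfl hsum
      have h2eq : a j2 = b j2 := heq j2 (Ne.symm hj12)
      have : a j1 * a j2 = b j1 * b j2 := by rw [← ha, ← hb, hs]
      have haj1 : a j1 = b j1 := by
        rw [h2eq] at this
        exact mul_right_cancel₀ hb2 this
      funext i
      by_cases hi : i = j1
      · rw [hi]; exact haj1
      · exact heq i hi
    rw [this]
    calc _ ≤ Fintype.card ({i : Fin d // i ≠ j1} → F) := Finset.card_le_univ _
      _ = q ^ (d - 1) := by rw [Fintype.card_fun, hcard1]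
  -- A2 : x j0 is determined up to sign
  have h2 : A2.card ≤ 2 * q ^ (d - 1) := by
    have : A2.card ≤ 2 * (A2.image (fun (x : Fin d → F) (i : {i : Fin d // i ≠ j0}) => x i)).card := by
      apply Finset.card_le_mul_card_image
      intro a ha
      obtain ⟨y, hy, hya⟩ := Finset.mem_image.mp ha
      apply le_trans (Finset.card_le_card (?_ :
        A2.filter (fun x => (fun (i : {i : Fin d // i ≠ j0}) => x i) = a) ⊆
          {y, Function.update y j0 (-(y j0))}))
      · exact le_trans (Finset.card_insert_le _ _) (by simp)
      intro z hz
      simp only [hA2, mem_filter] at hz hy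
      obtain ⟨⟨hz, hz2⟩, hza⟩ := hz
      obtain ⟨hy, hy2⟩ := hy
      have heq : ∀ i : Fin d, i ≠ j0 → z i = y i := by
        intro i hi
        have := congrFun (hza.trans hya.symm) ⟨i, hi⟩
        simpa using this
      simp only [cone, mem_filter, mem_univ, true_and] at hz hy
      have hzj2 : z j2 = 0 := hz2
      have hyj2 : y j2 = 0 := hy2
      rw [hzj2, mul_zero] at hz
      rw [hyj2, mul_zero] at hy
      -- sums split off j0
      rw [← Finset.add_sum_erase _ _ hmem0] at hz hy
      have hrest : (∑ i ∈ (Finset.univ.filter (fun i : Fin d => (i : ℕ) < d - 2)).erase j0, z i ^ 2)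
          = ∑ i ∈ (Finset.univ.filter (fun i : Fin d => (i : ℕ) < d - 2)).erase j0, y i ^ 2 := by
        apply Finset.sum_congr rfl
        intro i hi
        rw [heq i (Finset.ne_of_mem_erase hi)]
      have hsq : z j0 ^ 2 = y j0 ^ 2 := by
        have h' := hz.trans hy.symm
        rw [hrest] at h'
        exact add_right_cancel h'
      have hcases : z j0 = y j0 ∨ z j0 = -(y j0) := by
        have hfac : (z j0 - y j0) * (z j0 + y j0) = 0 := by linear_combination hsq
        rcases mul_eq_zero.mp hfac with h | h
        · left; exact sub_eq_zero.mp h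
        · right; exact eq_neg_of_add_eq_zero_left h
      simp only [Finset.mem_insert, Finset.mem_singleton]
      rcases hcases with h | h
      · left
        funext i
        by_cases hi : i = j0
        · rw [hi]; exact h
        · exact heq i hi
      · right
        funext i
        by_cases hi : i = j0
        · rw [hi, Function.update_self]; exact h
        · rw [Function.update_of_ne hi]; exact heq i hi
    refine le_trans this ?_
    refine Nat.mul_le_mul_left 2 ?_
    calc _ ≤ Fintype.card ({i : Fin d // i ≠ j0} → F) := Finset.card_le_univ _
      _ = q ^ (d - 1) := by rw [Fintype.card_fun, hcard0]
  rw [hsplit]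
  calc A2.card + A1.card ≤ 2 * q ^ (d-1) + q ^ (d-1) := Nat.add_le_add h2 h1
    _ = 3 * q ^ (d-1) := by ring


instance instMSC (V : Type) (d : ℕ) : MeasurableSingletonClass (Fin d → V) :=
  ⟨fun _ => trivial⟩

lemma ind_eq_indicator {V : Type} [DecidableEq V] (E : Finset V) :
    ind E = Set.indicator (↑E : Set V) (fun _ => (1 : ℂ)) := by
  funext x
  by_cases hx : x ∈ E <;> simp [ind, hx]

lemma dxMeasure_finset (d : ℕ) (E : Finset (Fin d → F)) :
    dxMeasure F d (↑E : Set (Fin d → F)) =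
      ((Fintype.card F : ℝ≥0∞) ^ d)⁻¹ * E.card := by
  rw [dxMeasure, Measure.smul_apply, smul_eq_mul, Measure.count_apply_finset]

lemma coneMeasure_finset (d : ℕ) (hd : 3 ≤ d) (B : Finset (Fin d → F))
    (hB : B ⊆ cone F d hd) :
    coneMeasure F d hd (↑B : Set (Fin d → F)) =
      (((cone F d hd).card : ℝ≥0∞))⁻¹ * B.card := by
  rw [coneMeasure, Measure.smul_apply, smul_eq_mul,
    Measure.restrict_apply MeasurableSpace.measurableSet_top]
  congr 1
  rw [Set.inter_eq_left.mpr (by exact_mod_cast hB), Measure.count_apply_finset]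

/-- norm of the averaging operator applied to an indicator -/
lemma norm_avg_ind (d : ℕ) (hd : 3 ≤ d) (E : Finset (Fin d → F)) (y : Fin d → F) :
    ‖avg F d hd (ind E) y‖ =
      (((cone F d hd).filter fun x => y - x ∈ E).card : ℝ) / (cone F d hd).card := by
  have : avg F d hd (ind E) y = (((cone F d hd).card : ℂ))⁻¹ *
      ((((cone F d hd).filter fun x => y - x ∈ E).card : ℕ) : ℂ) := by
    rw [avg]
    congr 1
    simp only [ind]
    rw [Finset.sum_boole]
  rw [this, norm_mul, norm_inv, Complex.norm_natCast, Complex.norm_natCast,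
    div_eq_inv_mul]

lemma test_real (d : ℕ) (hd : 3 ≤ d) {p r : ℝ≥0∞} (hp : 1 ≤ p) (hr : 1 ≤ r)
    {C₀ : ℝ} (hC₀ : 0 < C₀)
    (E B : Finset (Fin d → F)) (hE : E.Nonempty) (hB0 : B.Nonempty)
    (hB : B ⊆ cone F d hd) (c : ℝ) (hc : 0 ≤ c)
    (hav : ∀ y ∈ B, c ≤ ‖avg F d hd (ind E) y‖)
    (hop : eLpNorm (avg F d hd (ind E)) r (coneMeasure F d hd) ≤
      ENNReal.ofReal C₀ * eLpNorm (ind E) p (dxMeasure F d)) :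
    c * ((((cone F d hd).card : ℝ))⁻¹ * B.card) ^ (r⁻¹.toReal) ≤
      C₀ * ((((Fintype.card F : ℝ)) ^ d)⁻¹ * E.card) ^ (p⁻¹.toReal) := by
  have hq : 0 < Fintype.card F := Fintype.card_pos
  have hK : 0 < (cone F d hd).card :=
    Finset.card_pos.mpr ⟨0, zero_mem_cone d hd⟩
  have hp0 : p ≠ 0 := by positivity
  have hr0 : r ≠ 0 := by positivity
  -- measure values
  have hμB : coneMeasure F d hd (↑B : Set (Fin d → F)) =
      (((cone F d hd).card : ℝ≥0∞))⁻¹ * B.card := coneMeasure_finset d hd B hB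
  have hμE : dxMeasure F d (↑E : Set (Fin d → F)) =
      ((Fintype.card F : ℝ≥0∞) ^ d)⁻¹ * E.card := dxMeasure_finset d E
  have hμBne : coneMeasure F d hd (↑B : Set (Fin d → F)) ≠ 0 := by
    rw [hμB]
    refine mul_ne_zero ?_ ?_
    · simp
    · exact_mod_cast Finset.card_pos.mpr hB0 |>.ne'
  have hμEne : dxMeasure F d (↑E : Set (Fin d → F)) ≠ 0 := by
    rw [hμE]
    refine mul_ne_zero ?_ ?_
    · exact ENNReal.inv_ne_zero.mpr (ENNReal.pow_ne_top (ENNReal.natCast_ne_top _))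
    · exact_mod_cast Finset.card_pos.mpr hE |>.ne'
  -- lower bound for LHS
  have hL : ENNReal.ofReal c *
      (coneMeasure F d hd (↑B : Set (Fin d → F))) ^ (1 / r.toReal) ≤
      eLpNorm (avg F d hd (ind E)) r (coneMeasure F d hd) := by
    have heq := eLpNorm_indicator_const' (μ := coneMeasure F d hd)
      (s := (↑B : Set (Fin d → F))) (c := c) MeasurableSpace.measurableSet_top hμBne hr0
    rw [Real.enorm_eq_ofReal hc] at heq
    rw [← heq]
    apply eLpNorm_mono
    intro z
    by_cases hz : z ∈ (↑B : Set (Fin d → F))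
    · rw [Set.indicator_of_mem hz]
      calc ‖c‖ = c := Real.norm_of_nonneg hc
        _ ≤ _ := hav z hz
    · rw [Set.indicator_of_notMem hz]
      simp
  -- RHS value
  have hR : eLpNorm (ind E) p (dxMeasure F d) =
      (dxMeasure F d (↑E : Set (Fin d → F))) ^ (1 / p.toReal) := by
    rw [ind_eq_indicator]
    rw [eLpNorm_indicator_const' MeasurableSpace.measurableSet_top hμEne hp0]
    simp
  -- ENNReal inequality
  have hmain : ENNReal.ofReal c *
      ((((cone F d hd).card : ℝ≥0∞))⁻¹ * B.card) ^ (1 / r.toReal) ≤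
      ENNReal.ofReal C₀ * (((Fintype.card F : ℝ≥0∞) ^ d)⁻¹ * E.card) ^ (1 / p.toReal) := by
    rw [← hμB, ← hμE]
    exact le_trans hL (le_trans hop (by rw [hR]))
  -- pass to real numbers
  have hrne : (1 : ℝ) / r.toReal = r⁻¹.toReal := by
    rw [ENNReal.toReal_inv, one_div]
  have hpne : (1 : ℝ) / p.toReal = p⁻¹.toReal := by
    rw [ENNReal.toReal_inv, one_div]
  rw [hrne, hpne] at hmain
  have hx0 : (0:ℝ) ≤ p⁻¹.toReal := ENNReal.toReal_nonneg
  have hy0 : (0:ℝ) ≤ r⁻¹.toReal := ENNReal.toReal_nonneg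
  have hfin : ENNReal.ofReal C₀ *
      (((Fintype.card F : ℝ≥0∞) ^ d)⁻¹ * E.card) ^ (p⁻¹.toReal) ≠ ∞ := by
    apply ENNReal.mul_ne_top ENNReal.ofReal_ne_top
    apply ENNReal.rpow_ne_top_of_nonneg hx0
    apply ENNReal.mul_ne_top _ (ENNReal.natCast_ne_top _)
    simp [ENNReal.inv_ne_top]
  have := ENNReal.toReal_mono hfin hmain
  simp only [ENNReal.toReal_mul, ← ENNReal.toReal_rpow, ENNReal.toReal_ofReal hc,
    ENNReal.toReal_ofReal hC₀.le, ENNReal.toReal_inv, ENNReal.toReal_pow,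
    ENNReal.toReal_natCast, ENNReal.toReal_inv] at this
  rw [ENNReal.toReal_inv, ENNReal.toReal_inv]
  exact this

lemma rpow_bound {Q c1 c2 a b : ℝ} (hQ : 0 < Q) (hc1 : 0 < c1)
    (h : c1 * Q ^ a ≤ c2 * Q ^ b) : Q ^ (a - b) ≤ c2 / c1 := by
  rw [Real.rpow_sub hQ, div_le_div_iff₀ (Real.rpow_pos_of_pos hQ b) hc1]
  linarith

lemma exp_nonpos {α M : ℝ} (hM : 0 < M)
    (h : ∀ n : ℕ, ∃ q : ℕ, n ≤ q ∧ (q : ℝ) ^ α ≤ M) : α ≤ 0 := by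
  by_contra hα
  push_neg at hα
  obtain ⟨q, hq, hqM⟩ := h (⌈M ^ (1/α)⌉₊ + 1)
  have hMpos : (0:ℝ) < M := hM
  have hQ : M ^ (1/α) < (q:ℝ) := by
    have h1 : M ^ (1/α) ≤ (⌈M ^ (1/α)⌉₊ : ℝ) := Nat.le_ceil _
    have h2 : ((⌈M ^ (1/α)⌉₊ : ℝ)) < q := by exact_mod_cast hq
    linarith
  have : M < (q:ℝ) ^ α := by
    calc M = (M ^ (1/α)) ^ α := by
          rw [← Real.rpow_mul hMpos.le, one_div, inv_mul_cancel₀ hα.ne', Real.rpow_one]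
      _ < (q:ℝ) ^ α := Real.rpow_lt_rpow (Real.rpow_nonneg hMpos.le _) hQ hα
  linarith

section FieldTests

variable {d : ℕ} {hd : 3 ≤ d} {p r : ℝ≥0∞} {C₀ : ℝ}

-- common notations are spelled out in each lemma

lemma field_test2 (hd : 3 ≤ d) (hp : 1 ≤ p) (hr : 1 ≤ r) (hC₀ : 0 < C₀)
    (hx1 : p⁻¹.toReal ≤ 1)
    (hop : eLpNorm (avg F d hd (ind {0})) r (coneMeasure F d hd) ≤
      ENNReal.ofReal C₀ * eLpNorm (ind ({0} : Finset (Fin d → F))) p (dxMeasure F d)) :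
    (Fintype.card F : ℝ) ^ ((d:ℝ) * p⁻¹.toReal - ((d:ℝ) - 1)) ≤ 3 * C₀ := by
  have hQ1 : (1:ℝ) < (Fintype.card F : ℝ) := by exact_mod_cast Fintype.one_lt_card
  have hK : 0 < (cone F d hd).card := Finset.card_pos.mpr ⟨0, zero_mem_cone d hd⟩
  have hKpos : (0:ℝ) < ((cone F d hd).card : ℝ) := by exact_mod_cast hK
  have hKle' : ((cone F d hd).card : ℝ) ≤ 3 * (Fintype.card F : ℝ) ^ (d - 1 : ℕ) := by
    exact_mod_cast cone_card_le (F := F) d hd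
  set x := p⁻¹.toReal with hxdef
  set Q := (Fintype.card F : ℝ) with hQdef
  have hQ0 : (0:ℝ) < Q := by linarith
  have hKle : ((cone F d hd).card : ℝ) ≤ 3 * Q ^ ((d:ℝ) - 1) := by
    rwa [← Real.rpow_natCast Q (d-1), Nat.cast_sub (by omega), Nat.cast_one] at hKle'
  have hav : ∀ z ∈ cone F d hd, (((cone F d hd).card : ℝ))⁻¹ ≤
      ‖avg F d hd (ind ({0} : Finset (Fin d → F))) z‖ := by
    intro z hz
    rw [norm_avg_ind]
    have hfil : ((cone F d hd).filter fun w => z - w ∈ ({0} : Finset (Fin d → F))) = {z} := by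
      ext w
      simp only [Finset.mem_filter, Finset.mem_singleton, sub_eq_zero]
      constructor
      · rintro ⟨-, h⟩; exact h.symm
      · rintro rfl; exact ⟨hz, rfl⟩
    rw [hfil]
    simp [one_div]
  have t1 := test_real d hd hp hr hC₀ {0} (cone F d hd) ⟨0, Finset.mem_singleton_self 0⟩
    ⟨0, zero_mem_cone d hd⟩ (subset_refl _) _ (by positivity) hav hop
  rw [Finset.card_singleton, Nat.cast_one, mul_one, inv_mul_cancel₀ hKpos.ne',
    Real.one_rpow, mul_one] at t1
  -- t1 : K⁻¹ ≤ C₀ * ((Q^d)⁻¹)^x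
  have hrw : (((Q:ℝ) ^ d)⁻¹) ^ x = Q ^ (-(d:ℝ) * x) := by
    rw [Real.rpow_mul hQ0.le, Real.rpow_neg hQ0.le, Real.rpow_natCast]
  rw [hrw] at t1
  have hlow : (1/3) * Q ^ (-((d:ℝ) - 1)) ≤ (((cone F d hd).card : ℝ))⁻¹ := by
    rw [Real.rpow_neg hQ0.le]
    rw [show (1/3) * (Q ^ ((d:ℝ)-1))⁻¹ = (3 * Q ^ ((d:ℝ)-1))⁻¹ by
      rw [mul_inv]; ring]
    exact inv_anti₀ hKpos hKle
  have hcomb : (1/3) * Q ^ (-((d:ℝ) - 1)) ≤ C₀ * Q ^ (-(d:ℝ) * x) :=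
    le_trans hlow t1
  have := rpow_bound hQ0 (by norm_num) hcomb
  rw [show -((d:ℝ) - 1) - -(d:ℝ) * x = (d:ℝ) * x - ((d:ℝ) - 1) by ring] at this
  calc Q ^ ((d:ℝ) * x - ((d:ℝ) - 1)) ≤ C₀ / (1/3) := this
    _ = 3 * C₀ := by ring


lemma field_test3 (hd : 3 ≤ d) (hp : 1 ≤ p) (hr : 1 ≤ r) (hC₀ : 0 < C₀)
    (hx1 : p⁻¹.toReal ≤ 1) (hy1 : r⁻¹.toReal ≤ 1)
    (hop : eLpNorm (avg F d hd (ind (cone F d hd))) r (coneMeasure F d hd) ≤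
      ENNReal.ofReal C₀ * eLpNorm (ind (cone F d hd)) p (dxMeasure F d)) :
    (Fintype.card F : ℝ) ^ (p⁻¹.toReal - ((d:ℝ) - 1) * r⁻¹.toReal) ≤ 9 * C₀ := by
  have hQ1 : (1:ℝ) < (Fintype.card F : ℝ) := by exact_mod_cast Fintype.one_lt_card
  have hK : 0 < (cone F d hd).card := Finset.card_pos.mpr ⟨0, zero_mem_cone d hd⟩
  have hKpos : (0:ℝ) < ((cone F d hd).card : ℝ) := by exact_mod_cast hK
  have hKle' : ((cone F d hd).card : ℝ) ≤ 3 * (Fintype.card F : ℝ) ^ (d - 1 : ℕ) := by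
    exact_mod_cast cone_card_le (F := F) d hd
  set x := p⁻¹.toReal with hxdef
  set y := r⁻¹.toReal with hydef
  set Q := (Fintype.card F : ℝ) with hQdef
  set KR := ((cone F d hd).card : ℝ) with hKRdef
  have hQ0 : (0:ℝ) < Q := by linarith
  have hx0 : 0 ≤ x := ENNReal.toReal_nonneg
  have hy0 : 0 ≤ y := ENNReal.toReal_nonneg
  have hKle : KR ≤ 3 * Q ^ ((d:ℝ) - 1) := by
    rwa [← Real.rpow_natCast Q (d-1), Nat.cast_sub (by omega), Nat.cast_one] at hKle'
  have hav : ∀ z ∈ ({0} : Finset (Fin d → F)), (1:ℝ) ≤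
      ‖avg F d hd (ind (cone F d hd)) z‖ := by
    intro z hz
    have hz0 : z = 0 := Finset.mem_singleton.mp hz
    subst hz0
    rw [norm_avg_ind]
    rw [Finset.filter_true_of_mem (fun w hw => by
      rw [zero_sub]; exact neg_mem_cone hw)]
    exact le_of_eq (div_self hKpos.ne').symm
  have t2 := test_real d hd hp hr hC₀ (cone F d hd) {0} ⟨0, zero_mem_cone d hd⟩
    ⟨0, Finset.mem_singleton_self 0⟩
    (Finset.singleton_subset_iff.mpr (zero_mem_cone d hd)) 1 zero_le_one hav hop
  rw [Finset.card_singleton, Nat.cast_one, mul_one, one_mul] at t2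
  -- t2 : (KR⁻¹)^y ≤ C₀ * ((Q^d)⁻¹ * KR)^x
  have hstep1 : (1/3) * Q ^ (-((d:ℝ)-1) * y) ≤ (KR⁻¹) ^ y := by
    have h1 : ((3 * Q ^ ((d:ℝ)-1))⁻¹) ^ y ≤ (KR⁻¹) ^ y :=
      Real.rpow_le_rpow (by positivity) (inv_anti₀ hKpos hKle) hy0
    have h2 : ((3 * Q ^ ((d:ℝ)-1))⁻¹) ^ y
        = (3⁻¹ : ℝ) ^ y * Q ^ (-((d:ℝ)-1) * y) := by
      rw [mul_inv, Real.mul_rpow (by norm_num) (by positivity),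
        ← Real.rpow_neg hQ0.le, ← Real.rpow_mul hQ0.le]
      try ring_nf
    have h3 : (1/3 : ℝ) ≤ (3⁻¹ : ℝ) ^ y := by
      have := Real.rpow_le_rpow_of_exponent_ge (x := (3⁻¹:ℝ)) (by norm_num)
        (by norm_num) hy1
      rw [Real.rpow_one] at this
      linarith
    calc (1/3) * Q ^ (-((d:ℝ)-1) * y) ≤ (3⁻¹:ℝ) ^ y * Q ^ (-((d:ℝ)-1) * y) := by
          apply mul_le_mul_of_nonneg_right h3 (by positivity)
      _ = ((3 * Q ^ ((d:ℝ)-1))⁻¹) ^ y := h2.symm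
      _ ≤ _ := h1
  have hstep2 : ((Q ^ d)⁻¹ * KR) ^ x ≤ 3 * Q ^ (-x) := by
    have h1 : (Q ^ d)⁻¹ * KR ≤ 3 * Q ^ (-1 : ℝ) := by
      have h2 : (Q ^ d)⁻¹ * KR ≤ (Q ^ d)⁻¹ * (3 * Q ^ ((d:ℝ)-1)) :=
        mul_le_mul_of_nonneg_left hKle (by positivity)
      have h3 : (Q ^ d)⁻¹ * (3 * Q ^ ((d:ℝ)-1)) = 3 * Q ^ (-1 : ℝ) := by
        rw [← Real.rpow_natCast Q d, ← Real.rpow_neg hQ0.le]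
        rw [show (Q ^ (-(d:ℝ)) * (3 * Q ^ ((d:ℝ)-1))) = 3 * (Q ^ (-(d:ℝ)) * Q ^ ((d:ℝ)-1)) by ring,
          ← Real.rpow_add hQ0]
        ring_nf
      linarith
    calc ((Q ^ d)⁻¹ * KR) ^ x ≤ (3 * Q ^ (-1:ℝ)) ^ x :=
          Real.rpow_le_rpow (by positivity) h1 hx0
      _ = (3:ℝ) ^ x * Q ^ (-x) := by
          rw [Real.mul_rpow (by norm_num) (by positivity), ← Real.rpow_mul hQ0.le]
          ring_nf
      _ ≤ 3 * Q ^ (-x) := by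
          have h4 : (3:ℝ) ^ x ≤ 3 := by
            have := Real.rpow_le_rpow_of_exponent_le (x := (3:ℝ)) (by norm_num) hx1
            rwa [Real.rpow_one] at this
          apply mul_le_mul_of_nonneg_right h4 (by positivity)
  have hcomb : (1/3) * Q ^ (-((d:ℝ)-1) * y) ≤ (3 * C₀) * Q ^ (-x) := by
    calc (1/3) * Q ^ (-((d:ℝ)-1) * y) ≤ (KR⁻¹) ^ y := hstep1
      _ ≤ C₀ * ((Q ^ d)⁻¹ * KR) ^ x := t2
      _ ≤ C₀ * (3 * Q ^ (-x)) := mul_le_mul_of_nonneg_left hstep2 hC₀.le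
      _ = (3 * C₀) * Q ^ (-x) := by ring
  have := rpow_bound hQ0 (by norm_num) hcomb
  rw [show -((d:ℝ)-1) * y - -x = x - ((d:ℝ)-1) * y by ring] at this
  calc Q ^ (x - ((d:ℝ)-1) * y) ≤ (3 * C₀) / (1/3) := this
    _ = 9 * C₀ := by ring

lemma field_test4 (hd : 3 ≤ d) (e : ℕ) (hde : d = 2*e) (hp : 1 ≤ p) (hr : 1 ≤ r)
    (hC₀ : 0 < C₀) (hx1 : p⁻¹.toReal ≤ 1) (hy1 : r⁻¹.toReal ≤ 1)
    (H : Submodule F (Fin d → F)) (hHrank : Module.finrank F H = e)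
    (hHsub : (H : Set (Fin d → F)) ⊆ ↑(cone F d hd))
    (hop : ∀ f : (Fin d → F) → ℂ,
      eLpNorm (avg F d hd f) r (coneMeasure F d hd) ≤
        ENNReal.ofReal C₀ * eLpNorm f p (dxMeasure F d)) :
    (Fintype.card F : ℝ) ^ ((1-(e:ℝ)) * (1 + r⁻¹.toReal) + (e:ℝ) * p⁻¹.toReal) ≤ 9 * C₀ := by
  classical
  have hQ1 : (1:ℝ) < (Fintype.card F : ℝ) := by exact_mod_cast Fintype.one_lt_card
  have hK : 0 < (cone F d hd).card := Finset.card_pos.mpr ⟨0, zero_mem_cone d hd⟩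
  have hKpos : (0:ℝ) < ((cone F d hd).card : ℝ) := by exact_mod_cast hK
  have hKle' : ((cone F d hd).card : ℝ) ≤ 3 * (Fintype.card F : ℝ) ^ (d - 1 : ℕ) := by
    exact_mod_cast cone_card_le (F := F) d hd
  -- the subspace as a finset
  set Hf : Finset (Fin d → F) := Set.Finite.toFinset (Set.toFinite (H : Set (Fin d → F)))
    with hHfdef
  have hmem : ∀ w : Fin d → F, w ∈ Hf ↔ w ∈ H := by
    intro w
    rw [hHfdef, Set.Finite.mem_toFinset, SetLike.mem_coe]
  have hHfcard : Hf.card = Fintype.card F ^ e := by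
    have : Fintype ↥H := Fintype.ofFinite ↥H
    calc Hf.card = Nat.card ↥(H : Set (Fin d → F)) :=
          (Nat.card_eq_card_finite_toFinset _).symm
      _ = Nat.card ↥H := by rw [SetLike.coe_sort_coe]
      _ = Fintype.card ↥H := Nat.card_eq_fintype_card
      _ = Fintype.card F ^ e := by
          rw [Module.card_eq_pow_finrank (K := F) (V := ↥H), hHrank]
  have hHfcardR : ((Hf.card : ℝ)) = (Fintype.card F : ℝ) ^ e := by
    rw [hHfcard]; push_cast; ring
  have hsubset : Hf ⊆ cone F d hd := by
    intro w hw
    exact Finset.mem_coe.mp (hHsub ((hmem w).mp hw))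
  have h0 : (0 : Fin d → F) ∈ Hf := (hmem 0).mpr (zero_mem H)
  set x := p⁻¹.toReal with hxdef
  set y := r⁻¹.toReal with hydef
  set Q := (Fintype.card F : ℝ) with hQdef
  set KR := ((cone F d hd).card : ℝ) with hKRdef
  have hQ0 : (0:ℝ) < Q := by linarith
  have hx0 : 0 ≤ x := ENNReal.toReal_nonneg
  have hy0 : 0 ≤ y := ENNReal.toReal_nonneg
  have hKle : KR ≤ 3 * Q ^ ((d:ℝ) - 1) := by
    rwa [← Real.rpow_natCast Q (d-1), Nat.cast_sub (by omega), Nat.cast_one] at hKle'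
  have hav : ∀ z ∈ Hf, (KR⁻¹ * (Hf.card : ℝ)) ≤ ‖avg F d hd (ind Hf) z‖ := by
    intro z hz
    rw [norm_avg_ind]
    have hsub2 : Hf ⊆ (cone F d hd).filter (fun w => z - w ∈ Hf) := by
      intro w hw
      refine Finset.mem_filter.mpr ⟨hsubset hw, ?_⟩
      exact (hmem _).mpr (sub_mem ((hmem z).mp hz) ((hmem w).mp hw))
    have hcardle : (Hf.card : ℝ) ≤ (((cone F d hd).filter (fun w => z - w ∈ Hf)).card : ℝ) := by
      exact_mod_cast Finset.card_le_card hsub2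
    calc KR⁻¹ * (Hf.card : ℝ) = (Hf.card : ℝ) / KR := by rw [inv_mul_eq_div]
      _ ≤ _ := by gcongr
  have t3 := test_real d hd hp hr hC₀ Hf Hf ⟨0, h0⟩ ⟨0, h0⟩ hsubset
    (KR⁻¹ * (Hf.card : ℝ)) (by positivity) hav (hop (ind Hf))
  have hd2e : (d:ℝ) = 2*(e:ℝ) := by exact_mod_cast congrArg (Nat.cast (R := ℝ)) hde
  have hHQ : ((Hf.card : ℝ)) = Q ^ ((e:ℝ)) := by rw [hHfcardR, Real.rpow_natCast]
  have hA : (1/3) * Q ^ (1-(e:ℝ)) ≤ KR⁻¹ * (Hf.card : ℝ) := by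
    have h1 : (3*Q^((d:ℝ)-1))⁻¹ ≤ KR⁻¹ := inv_anti₀ hKpos hKle
    have key : (3*Q^((d:ℝ)-1))⁻¹ * Q ^ ((e:ℝ)) = (1/3) * Q ^ (1-(e:ℝ)) := by
      rw [mul_inv, ← Real.rpow_neg hQ0.le, mul_assoc, ← Real.rpow_add hQ0,
        show -((d:ℝ)-1) + (e:ℝ) = 1-(e:ℝ) by rw [hd2e]; ring, one_div]
    calc (1/3) * Q ^ (1-(e:ℝ)) = (3*Q^((d:ℝ)-1))⁻¹ * Q ^ ((e:ℝ)) := key.symm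
      _ ≤ KR⁻¹ * Q ^ ((e:ℝ)) := mul_le_mul_of_nonneg_right h1 (by positivity)
      _ = KR⁻¹ * (Hf.card : ℝ) := by rw [hHQ]
  have hA0 : (0:ℝ) ≤ (1/3) * Q ^ (1-(e:ℝ)) := by positivity
  have hpow : (1/3) * Q ^ ((1-(e:ℝ))*y) ≤ ((1/3) * Q ^ (1-(e:ℝ))) ^ y := by
    rw [Real.mul_rpow (by norm_num) (by positivity), ← Real.rpow_mul hQ0.le]
    apply mul_le_mul_of_nonneg_right _ (by positivity)
    have := Real.rpow_le_rpow_of_exponent_ge (x := (1/3:ℝ)) (by norm_num) (by norm_num) hy1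
    rwa [Real.rpow_one] at this
  have hL : (1/9) * Q ^ ((1-(e:ℝ))*(1+y)) ≤
      (KR⁻¹ * (Hf.card : ℝ)) * (KR⁻¹ * (Hf.card : ℝ)) ^ y := by
    calc (1/9) * Q ^ ((1-(e:ℝ))*(1+y))
        = ((1/3)*Q^(1-(e:ℝ))) * ((1/3) * Q^((1-(e:ℝ))*y)) := by
          rw [show ((1-(e:ℝ))*(1+y)) = (1-(e:ℝ)) + (1-(e:ℝ))*y by ring,
            Real.rpow_add hQ0]
          ring
      _ ≤ (KR⁻¹ * (Hf.card : ℝ)) * ((KR⁻¹ * (Hf.card : ℝ))) ^ y := by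
          apply mul_le_mul hA (le_trans hpow (Real.rpow_le_rpow hA0 hA hy0))
            (by positivity) (le_trans hA0 hA)
  have hR : ((Q^d)⁻¹ * (Hf.card : ℝ)) ^ x = Q ^ (-(e:ℝ)*x) := by
    rw [hHQ, ← Real.rpow_natCast Q d, ← Real.rpow_neg hQ0.le, ← Real.rpow_add hQ0,
      show -(d:ℝ) + (e:ℝ) = -(e:ℝ) by rw [hd2e]; ring, ← Real.rpow_mul hQ0.le]
  rw [hR] at t3
  have hcomb : (1/9) * Q ^ ((1-(e:ℝ))*(1+y)) ≤ C₀ * Q ^ (-(e:ℝ)*x) :=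
    le_trans hL t3
  have := rpow_bound hQ0 (by norm_num) hcomb
  rw [show (1-(e:ℝ))*(1+y) - -(e:ℝ)*x = (1-(e:ℝ))*(1+y) + (e:ℝ)*x by ring] at this
  calc Q ^ ((1-(e:ℝ))*(1+y) + (e:ℝ)*x) ≤ C₀ / (1/9) := this
    _ = 9 * C₀ := by ring

end FieldTests

lemma mem3 {S : Set (ℝ×ℝ)} {u v w z : ℝ×ℝ} (hu : u ∈ S) (hv : v ∈ S) (hw : w ∈ S)
    {a b c : ℝ} (ha : 0 ≤ a) (hb : 0 ≤ b) (hc : 0 ≤ c) (habc : a + b + c = 1)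
    (hz : z = a • u + b • v + c • w) : z ∈ convexHull ℝ S := by
  have := (convex_convexHull ℝ S).sum_mem (t := (Finset.univ : Finset (Fin 3)))
    (w := ![a,b,c]) (z := ![u,v,w])
    (by intro i _; fin_cases i <;> simpa)
    (by simp [Fin.sum_univ_three, habc])
    (by intro i _; fin_cases i <;> simp <;> exact subset_convexHull ℝ S ‹_›)
  simpa [Fin.sum_univ_three, hz] using this

lemma geom (d : ℕ) (hd : 4 ≤ d) {x y : ℝ} (hx0 : 0 ≤ x) (hy0 : 0 ≤ y) (hy1 : y ≤ 1)
    (h2 : (d:ℝ)*x ≤ (d:ℝ)-1) (h3 : x ≤ ((d:ℝ)-1)*y) (h4 : (d:ℝ)*x ≤ ((d:ℝ)-2)*(1+y)) :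
    (x, y) ∈ convexHull ℝ
      ({((0 : ℝ), (0 : ℝ)), ((0 : ℝ), (1 : ℝ)), (((d : ℝ) - 1) / d, (1 : ℝ)),
        (((d : ℝ) - 1) / d, 1 / ((d : ℝ) - 2)),
        (((d : ℝ) ^ 2 - 3 * d + 2) / ((d : ℝ) ^ 2 - 2 * d + 2),
          ((d : ℝ) - 2) / ((d : ℝ) ^ 2 - 2 * d + 2))} : Set (ℝ × ℝ)) := by
  have hd4 : (4:ℝ) ≤ (d:ℝ) := by exact_mod_cast hd
  have hdpos : (0:ℝ) < d := by linarith
  have hd1 : (0:ℝ) < (d:ℝ) - 1 := by linarith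
  have hd2 : (0:ℝ) < (d:ℝ) - 2 := by linarith
  have hd3 : (0:ℝ) < (d:ℝ) - 3 := by linarith
  have hD : (0:ℝ) < (d:ℝ)^2 - 2*d + 2 := by nlinarith
  set S : Set (ℝ × ℝ) :=
      {((0 : ℝ), (0 : ℝ)), ((0 : ℝ), (1 : ℝ)), (((d : ℝ) - 1) / d, (1 : ℝ)),
        (((d : ℝ) - 1) / d, 1 / ((d : ℝ) - 2)),
        (((d : ℝ) ^ 2 - 3 * d + 2) / ((d : ℝ) ^ 2 - 2 * d + 2),
          ((d : ℝ) - 2) / ((d : ℝ) ^ 2 - 2 * d + 2))} with hS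
  have hA : ((0:ℝ),(0:ℝ)) ∈ S := by simp [hS]
  have hB : ((0:ℝ),(1:ℝ)) ∈ S := by simp [hS]
  have hC : (((d:ℝ)-1)/d, (1:ℝ)) ∈ S := by simp [hS]
  have hP1 : (((d:ℝ)-1)/d, 1/((d:ℝ)-2)) ∈ S := by simp [hS]
  have hP2 : (((d : ℝ) ^ 2 - 3 * d + 2) / ((d : ℝ) ^ 2 - 2 * d + 2),
          ((d : ℝ) - 2) / ((d : ℝ) ^ 2 - 2 * d + 2)) ∈ S := by simp [hS]
  rcases le_or_gt ((d:ℝ)*x) (((d:ℝ)-1)*y) with hc1 | hc1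
  · -- triangle A B C
    refine mem3 hA hB hC (a := 1 - y) (b := y - (d:ℝ)*x/((d:ℝ)-1)) (c := (d:ℝ)*x/((d:ℝ)-1))
      (by linarith) ?_ (by positivity) (by ring) ?_
    · rw [sub_nonneg, div_le_iff₀ hd1]; linarith
    · simp only [Prod.ext_iff, Prod.smul_mk, Prod.mk_add_mk, smul_eq_mul]
      constructor <;> field_simp <;> ring
  rcases le_or_gt ((d:ℝ)*x) (((d:ℝ)-1)*((d:ℝ)-2)*y) with hc2 | hc2
  · -- triangle A C P1
    refine mem3 hA hC hP1 (a := 1 - (d:ℝ)*x/((d:ℝ)-1))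
      (b := (((d:ℝ)-2)*y - (d:ℝ)*x/((d:ℝ)-1))/((d:ℝ)-3))
      (c := ((d:ℝ)*x/((d:ℝ)-1) - y)*((d:ℝ)-2)/((d:ℝ)-3)) ?_ ?_ ?_ (by field_simp; ring) ?_
    · rw [sub_nonneg, div_le_one hd1]; linarith
    · apply div_nonneg _ hd3.le
      rw [sub_nonneg, div_le_iff₀ hd1]
      calc (d:ℝ)*x ≤ ((d:ℝ)-1)*((d:ℝ)-2)*y := hc2
        _ = ((d:ℝ)-2)*y*((d:ℝ)-1) := by ring
    · apply div_nonneg _ hd3.le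
      apply mul_nonneg _ hd2.le
      rw [sub_nonneg, le_div_iff₀ hd1]; linarith
    · simp only [Prod.ext_iff, Prod.smul_mk, Prod.mk_add_mk, smul_eq_mul]
      constructor <;> field_simp <;> ring
  · -- triangle A P1 P2
    refine mem3 hA hP1 hP2
      (a := 1 - ((d:ℝ)*x - ((d:ℝ)-2)*y)/((d:ℝ)-2))
      (b := (d:ℝ)*((d:ℝ)-2)*(((d:ℝ)-1)*y - x)/(2*((d:ℝ)-1)))
      (c := ((d:ℝ)^2-2*d+2)*((d:ℝ)*x - ((d:ℝ)-1)*((d:ℝ)-2)*y)/(2*((d:ℝ)-1)*((d:ℝ)-2)))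
      ?_ ?_ ?_ ?_ ?_
    · rw [sub_nonneg, div_le_one hd2]; linarith
    · apply div_nonneg _ (by linarith : (0:ℝ) ≤ 2*((d:ℝ)-1))
      apply mul_nonneg (by positivity)
      linarith
    · apply div_nonneg _ (by nlinarith : (0:ℝ) ≤ 2*((d:ℝ)-1)*((d:ℝ)-2))
      apply mul_nonneg hD.le
      linarith
    · field_simp
      ring
    · simp only [Prod.ext_iff, Prod.smul_mk, Prod.mk_add_mk, smul_eq_mul]
      constructor <;> field_simp <;> ring


/-- necessary conditions for the boundedness of the restricted averaging
operator when the cone contains a `d/2`-dimensional subspace (even `d ≥ 4`). -/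
theorem statement3 (d : ℕ) (hd : 4 ≤ d) (hde : Even d) (p r : ℝ≥0∞) (hp : 1 ≤ p) (hr : 1 ≤ r)
    (C₀ : ℝ) (hC₀ : 0 < C₀)
    (h : ∃ N : ℕ, ∀ (F : Type) [Field F] [Fintype F] [DecidableEq F],
      ringChar F ≠ 2 → N ≤ Fintype.card F →
        (∃ H : Submodule F (Fin d → F), Module.finrank F H = d / 2 ∧
          (H : Set (Fin d → F)) ⊆ ↑(cone F d (by omega))) ∧
        (∀ f : (Fin d → F) → ℂ,
          eLpNorm (avg F d (by omega) f) r (coneMeasure F d (by omega)) ≤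
            ENNReal.ofReal C₀ * eLpNorm f p (dxMeasure F d))) :
    (p⁻¹.toReal, r⁻¹.toReal) ∈ convexHull ℝ
      ({((0 : ℝ), (0 : ℝ)), ((0 : ℝ), (1 : ℝ)), (((d : ℝ) - 1) / d, (1 : ℝ)),
        (((d : ℝ) - 1) / d, 1 / ((d : ℝ) - 2)),
        (((d : ℝ) ^ 2 - 3 * d + 2) / ((d : ℝ) ^ 2 - 2 * d + 2),
          ((d : ℝ) - 2) / ((d : ℝ) ^ 2 - 2 * d + 2))} : Set (ℝ × ℝ)) := by
  have hd3 : 3 ≤ d := by omega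
  obtain ⟨e, he2⟩ := hde
  have hde2 : d = 2 * e := by omega
  have he1 : 2 ≤ e := by omega
  obtain ⟨N, hN⟩ := h
  have hx0 : (0:ℝ) ≤ p⁻¹.toReal := ENNReal.toReal_nonneg
  have hy0 : (0:ℝ) ≤ r⁻¹.toReal := ENNReal.toReal_nonneg
  have hx1 : p⁻¹.toReal ≤ 1 := by
    have h1 : p⁻¹ ≤ 1 := ENNReal.inv_le_one.mpr hp
    have := ENNReal.toReal_mono (by simp) h1
    simpa using this
  have hy1 : r⁻¹.toReal ≤ 1 := by
    have h1 : r⁻¹ ≤ 1 := ENNReal.inv_le_one.mpr hr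
    have := ENNReal.toReal_mono (by simp) h1
    simpa using this
  have key : ∀ n : ℕ, ∃ q : ℕ, n ≤ q ∧
      ((q:ℝ) ^ ((d:ℝ)*p⁻¹.toReal - ((d:ℝ)-1)) ≤ 3*C₀ ∧
       (q:ℝ) ^ (p⁻¹.toReal - ((d:ℝ)-1)*r⁻¹.toReal) ≤ 9*C₀ ∧
       (q:ℝ) ^ ((1-(e:ℝ))*(1+r⁻¹.toReal) + (e:ℝ)*p⁻¹.toReal) ≤ 9*C₀) := by
    intro n
    obtain ⟨q, hq, hqp⟩ := Nat.exists_infinite_primes (max (max n N) 3)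
    haveI : Fact q.Prime := ⟨hqp⟩
    have hq3 : 3 ≤ q := le_trans (le_max_right _ _) hq
    have hqN : N ≤ q := le_trans (le_trans (le_max_right n N) (le_max_left _ _)) hq
    have hqn : n ≤ q := le_trans (le_trans (le_max_left n N) (le_max_left _ _)) hq
    have hchar : ringChar (ZMod q) ≠ 2 := by
      rw [ZMod.ringChar_zmod_n]; omega
    have hcard : N ≤ Fintype.card (ZMod q) := by rw [ZMod.card]; exact hqN
    obtain ⟨⟨H, hHrank, hHsub⟩, hop⟩ := hN (ZMod q) hchar hcard
    have hHrank' : Module.finrank (ZMod q) H = e := by rw [hHrank]; omega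
    refine ⟨q, hqn, ?_, ?_, ?_⟩
    · have := field_test2 (F := ZMod q) (d := d) hd3 hp hr hC₀ hx1 (hop (ind {0}))
      rwa [ZMod.card] at this
    · have := field_test3 (F := ZMod q) hd3 hp hr hC₀ hx1 hy1 (hop _)
      rwa [ZMod.card] at this
    · have := field_test4 (F := ZMod q) hd3 e hde2 hp hr hC₀ hx1 hy1 H hHrank' hHsub hop
      rwa [ZMod.card] at this
  have hM3 : (0:ℝ) < 3*C₀ := by linarith
  have hM9 : (0:ℝ) < 9*C₀ := by linarith
  have c2 : (d:ℝ)*p⁻¹.toReal - ((d:ℝ)-1) ≤ 0 :=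
    exp_nonpos hM3 (fun n => (key n).imp (fun q hq => ⟨hq.1, hq.2.1⟩))
  have c3 : p⁻¹.toReal - ((d:ℝ)-1)*r⁻¹.toReal ≤ 0 :=
    exp_nonpos hM9 (fun n => (key n).imp (fun q hq => ⟨hq.1, hq.2.2.1⟩))
  have c4 : (1-(e:ℝ))*(1+r⁻¹.toReal) + (e:ℝ)*p⁻¹.toReal ≤ 0 :=
    exp_nonpos hM9 (fun n => (key n).imp (fun q hq => ⟨hq.1, hq.2.2.2⟩))
  have hd2e : (d:ℝ) = 2*(e:ℝ) := by exact_mod_cast congrArg (Nat.cast (R := ℝ)) hde2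
  have c4'' : (e:ℝ)*p⁻¹.toReal ≤ ((e:ℝ)-1)*(1+r⁻¹.toReal) := by nlinarith [c4]
  have c4' : (d:ℝ)*p⁻¹.toReal ≤ ((d:ℝ)-2)*(1+r⁻¹.toReal) := by
    calc (d:ℝ)*p⁻¹.toReal = 2*((e:ℝ)*p⁻¹.toReal) := by rw [hd2e]; ring
      _ ≤ 2*(((e:ℝ)-1)*(1+r⁻¹.toReal)) := by linarith [c4'']
      _ = ((d:ℝ)-2)*(1+r⁻¹.toReal) := by rw [hd2e]; ring
  exact geom d hd hx0 hy0 hy1 (by linarith) (by linarith) c4'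

end ConeFF
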